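/- For all integers r ≥ 1 and j ≥ 0, the 2-Narayana number admits the closed form: Σ_{l=0}^{j} (-1)^{j-l} C(2r+1, j-l) · C(r+l, r) · C(r+1+l, r) / C(r+1, r) = (1/r) · C(r, j) · C(r, j+1), as an identity of rational numbers. -/

import Mathlib

namespace Stmt17Aux

/-- The summand of the `2`-Narayana sum (with sign written as `(-1)^j * (-1)^l`). -/
def tt (r j l : ℕ) : ℚ :=
  (-1) ^ j * (-1) ^ l * ((2 * r + 1).choose (j - l) : ℚ) *
    ((r + l).choose r : ℚ) * ((r + 1 + l).choose r : ℚ)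

/-- The WZ certificate function. -/
def GG (r j l : ℕ) : ℚ :=
  (-1) ^ j * (-1) ^ l * (l : ℚ) * ((l : ℚ) + 1) * ((2 * r + 1).choose (j + 1 - l) : ℚ) *
    ((r + l).choose r : ℚ) * ((r + 1 + l).choose r : ℚ)

lemma h1Q (r l : ℕ) :
    ((r + 1 + l).choose r : ℚ) * ((l : ℚ) + 1) =
      ((r + l).choose r : ℚ) * ((r : ℚ) + l + 1) := by
  have h0 := Nat.add_one_mul_choose_eq (r + l) l
  have e1 : (r + l).choose l = (r + l).choose r := by
    rw [Nat.add_comm r l]; exact Nat.choose_symm_add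
  have e2 : (r + l + 1).choose (l + 1) = (r + 1 + l).choose r := by
    have h' : r + l + 1 = l + 1 + r := by omega
    rw [h', Nat.choose_symm_add]
    congr 1
    omega
  rw [e1, e2] at h0
  have h0' : ((r : ℚ) + l + 1) * ((r + l).choose r : ℚ) =
      ((r + 1 + l).choose r : ℚ) * ((l : ℚ) + 1) := by exact_mod_cast h0
  linear_combination -h0'

lemma h3Q (r d : ℕ) :
    ((2 * r + 1).choose (d + 1) : ℚ) * ((d : ℚ) + 1) =
      ((2 * r + 1).choose d : ℚ) * (2 * (r : ℚ) + 1 - d) := by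
  rcases le_or_gt d (2 * r + 1) with h | h
  · have h0 := Nat.choose_succ_right_eq (2 * r + 1) d
    have h1 : ((2 * r + 1 - d : ℕ) : ℚ) = 2 * (r : ℚ) + 1 - d := by
      push_cast [h]; ring
    have h2 : (((2 * r + 1).choose (d + 1) * (d + 1) : ℕ) : ℚ)
        = (((2 * r + 1).choose d * (2 * r + 1 - d) : ℕ) : ℚ) := by exact_mod_cast h0
    push_cast [h] at h2
    linear_combination h2
  · rw [Nat.choose_eq_zero_of_lt h, Nat.choose_eq_zero_of_lt (lt_trans h (Nat.lt_succ_self _))]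
    simp

/-- Sign-free core identity. -/
lemma key (r l d : ℕ) :
    ((((l : ℚ) + d + 1) * ((l : ℚ) + d + 2) - l * (l + 1)) * ((2 * r + 1).choose (d + 1) : ℚ) +
        ((r : ℚ) - (l + d)) * ((r : ℚ) - (l + d) - 1) * ((2 * r + 1).choose d : ℚ)) *
        ((r + l).choose r : ℚ) * ((r + 1 + l).choose r : ℚ) =
      ((l : ℚ) + 1) * ((l : ℚ) + 2) * ((2 * r + 1).choose d : ℚ) *
        ((r + 1 + l).choose r : ℚ) * ((r + 2 + l).choose r : ℚ) := by
  have h1 := h1Q r l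
  have h2 := h1Q r (l + 1)
  have e1 : r + 1 + (l + 1) = r + 2 + l := by omega
  have e2 : r + (l + 1) = r + 1 + l := by omega
  rw [e1, e2] at h2
  push_cast at h2
  have h3 := h3Q r d
  set A : ℚ := ((2 * r + 1).choose d : ℚ)
  set B : ℚ := ((2 * r + 1).choose (d + 1) : ℚ)
  set P : ℚ := ((r + l).choose r : ℚ)
  set Q : ℚ := ((r + 1 + l).choose r : ℚ)
  set S : ℚ := ((r + 2 + l).choose r : ℚ)
  have hc : ((l : ℚ) + 1) * ((l : ℚ) + 2) * ((d : ℚ) + 1) ≠ 0 := by positivity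
  apply mul_right_cancel₀ hc
  linear_combination
    (-(((d : ℚ) + 1) * ((l : ℚ) + 1) * ((l : ℚ) + 2) * ((r : ℚ) + l + 2) * A * Q)) * h1 +
    (-(((l : ℚ) + 1) * ((l : ℚ) + 1) * ((l : ℚ) + 2) * ((d : ℚ) + 1) * A * Q)) * h2 +
    ((((l : ℚ) + d + 1) * ((l : ℚ) + d + 2) - l * (l + 1)) * P * Q * ((l : ℚ) + 1) *
      ((l : ℚ) + 2)) * h3

/-- The WZ pair relation. -/
lemma wz (r j l : ℕ) (h : l ≤ j) :
    ((j : ℚ) + 1) * ((j : ℚ) + 2) * tt r (j + 1) l -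
        ((r : ℚ) - j) * ((r : ℚ) - j - 1) * tt r j l =
      GG r j (l + 1) - GG r j l := by
  obtain ⟨d, rfl⟩ := Nat.exists_eq_add_of_le h
  unfold tt GG
  have e1 : l + d + 1 - l = d + 1 := by omega
  have e2 : l + d - l = d := by omega
  have e3 : l + d + 1 - (l + 1) = d := by omega
  have e4 : r + (l + 1) = r + 1 + l := by omega
  have e5 : r + 1 + (l + 1) = r + 2 + l := by omega
  rw [e1, e2, e3, e4, e5]
  have hk := key r l d
  push_cast
  linear_combination (-((-1 : ℚ) ^ (l + d) * (-1 : ℚ) ^ l)) * hk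

/-- The main sum. -/
def SS (r j : ℕ) : ℚ := ∑ l ∈ Finset.range (j + 1), tt r j l

lemma boundary (r j : ℕ) :
    GG r j (j + 1) + ((j : ℚ) + 1) * ((j : ℚ) + 2) * tt r (j + 1) (j + 1) = 0 := by
  unfold tt GG
  simp only [Nat.sub_self]
  push_cast
  ring

lemma GG_zero (r j : ℕ) : GG r j 0 = 0 := by
  unfold GG
  push_cast
  ring

/-- The Zeilberger recurrence. -/
lemma recj (r j : ℕ) :
    ((j : ℚ) + 1) * ((j : ℚ) + 2) * SS r (j + 1) =
      ((r : ℚ) - j) * ((r : ℚ) - j - 1) * SS r j := by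
  unfold SS
  rw [Finset.sum_range_succ, mul_add, Finset.mul_sum, Finset.mul_sum]
  have hsum : ∑ l ∈ Finset.range (j + 1), ((j : ℚ) + 1) * ((j : ℚ) + 2) * tt r (j + 1) l =
      ∑ l ∈ Finset.range (j + 1),
        (((r : ℚ) - j) * ((r : ℚ) - j - 1) * tt r j l + (GG r j (l + 1) - GG r j l)) := by
    refine Finset.sum_congr rfl fun l hl => ?_
    have hlj : l ≤ j := Nat.lt_succ_iff.mp (Finset.mem_range.mp hl)
    have := wz r j l hlj
    linarith [this]
  rw [hsum, Finset.sum_add_distrib, Finset.sum_range_sub (fun l => GG r j l)]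
  have hb := boundary r j
  have hz := GG_zero r j
  linarith [hb, hz]

lemma chooseQ (r j : ℕ) :
    ((r : ℚ) - j) * (r.choose j : ℚ) = ((j : ℚ) + 1) * (r.choose (j + 1) : ℚ) := by
  rcases le_or_gt j r with h | h
  · have h0 := Nat.choose_succ_right_eq r j
    have h2 : ((r.choose (j + 1) * (j + 1) : ℕ) : ℚ) = ((r.choose j * (r - j) : ℕ) : ℚ) := by
      exact_mod_cast h0
    push_cast [h] at h2
    linear_combination -h2
  · rw [Nat.choose_eq_zero_of_lt h, Nat.choose_eq_zero_of_lt (lt_trans h (Nat.lt_succ_self _))]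
    simp

/-- Closed form of the main sum. -/
lemma main (r j : ℕ) (hr : 1 ≤ r) :
    SS r j = ((r : ℚ) + 1) / r * (r.choose j : ℚ) * (r.choose (j + 1) : ℚ) := by
  have hr0 : (r : ℚ) ≠ 0 := by positivity
  induction j with
  | zero =>
      unfold SS tt
      rw [Finset.sum_range_one]
      simp only [Nat.sub_self, pow_zero, Nat.choose_zero_right, Nat.add_zero, Nat.choose_self,
        Nat.choose_one_right, Nat.choose_succ_self_right]
      push_cast
      field_simp
      simp [Nat.choose_one_right]
  | succ j ih =>
      have hrec := recj r j
      rw [ih] at hrec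
      have hA := chooseQ r j
      have hB := chooseQ r (j + 1)
      push_cast at hB
      have hj : ((j : ℚ) + 1) * ((j : ℚ) + 2) ≠ 0 := by positivity
      apply mul_left_cancel₀ hj
      rw [hrec]
      linear_combination (((r : ℚ) + 1) / r * (((r : ℚ) - j - 1) * (r.choose (j + 1) : ℚ))) * hA +
        (((r : ℚ) + 1) / r * (((j : ℚ) + 1) * (r.choose (j + 1) : ℚ))) * hB

end Stmt17Aux

/-- The `2`-Narayana number has the closed form of the classical Narayana number:
`Σ_{l=0}^{j} (-1)^{j-l} C(2r+1, j-l) C(r+l, r) C(r+1+l, r)/C(r+1, r)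
  = (1/r) C(r,j) C(r,j+1)` in `ℚ`. -/
theorem stmt17 (r j : ℕ) (hr : 1 ≤ r) :
    (∑ l ∈ Finset.range (j + 1), (-1) ^ (j - l) * ((2 * r + 1).choose (j - l) : ℚ) *
        ((r + l).choose r : ℚ) * ((r + 1 + l).choose r : ℚ) / ((r + 1).choose r : ℚ)) =
      (1 / (r : ℚ)) * (r.choose j : ℚ) * (r.choose (j + 1) : ℚ) := by
  have hr0 : (r : ℚ) ≠ 0 := by positivity
  have hr1 : ((r : ℚ) + 1) ≠ 0 := by positivity
  have hterm : ∀ l ∈ Finset.range (j + 1),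
      (-1) ^ (j - l) * ((2 * r + 1).choose (j - l) : ℚ) *
        ((r + l).choose r : ℚ) * ((r + 1 + l).choose r : ℚ) / ((r + 1).choose r : ℚ) =
      Stmt17Aux.tt r j l / ((r : ℚ) + 1) := by
    intro l hl
    have hlj : l ≤ j := Nat.lt_succ_iff.mp (Finset.mem_range.mp hl)
    have hsign : ((-1 : ℚ)) ^ (j - l) = (-1 : ℚ) ^ j * (-1 : ℚ) ^ l := by
      have h1 : ((-1 : ℚ)) ^ (j - l) * ((-1 : ℚ) ^ l * (-1 : ℚ) ^ l) = (-1 : ℚ) ^ (j - l) := by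
        rw [← pow_add, ← two_mul, pow_mul]
        norm_num
      calc ((-1 : ℚ)) ^ (j - l) = (-1 : ℚ) ^ (j - l) * ((-1 : ℚ) ^ l * (-1 : ℚ) ^ l) := h1.symm
        _ = ((-1 : ℚ) ^ (j - l) * (-1 : ℚ) ^ l) * (-1 : ℚ) ^ l := by ring
        _ = (-1 : ℚ) ^ j * (-1 : ℚ) ^ l := by
            rw [← pow_add]
            congr 2
            omega
    have hch : ((r + 1).choose r : ℚ) = (r : ℚ) + 1 := by
      rw [Nat.choose_succ_self_right]
      push_cast
      ring
    rw [hch, Stmt17Aux.tt, hsign]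
  rw [Finset.sum_congr rfl hterm, ← Finset.sum_div]
  have := Stmt17Aux.main r j hr
  rw [Stmt17Aux.SS] at this
  rw [this]
  field_simp
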